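/- For the Markov chain (P̃_k) on {0,1,...,n} with P̃_{k+1} | P̃_k = i ~ Binomial(n, i/n), started at P̃_0 = n p_0 (assumed an integer), Pr(P̃_k = 0) ≤ exp(-n p_0 g_k), where g_1 = 1 and g_{j+1} = 1 - exp(-g_j). -/

import Mathlib

/-- Upper bound on the absorption probability at 0 for the binomial resampling chain:
`p k i` is the probability that the chain is in state `i ∈ {0,…,n}` at time `k`,
started at `N = n p₀` (an integer), with transitions `Binomial(n, i/n)` from state `i`. -/
theorem binomial_chain_absorption_upper (n : ℕ) (hn : 0 < n) (p₀ : ℝ)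
    (hp₀0 : 0 ≤ p₀) (hp₀1 : p₀ ≤ 1) (N : ℕ) (hN : (N : ℝ) = n * p₀)
    (g : ℕ → ℝ) (hg1 : g 1 = 1)
    (hgrec : ∀ k ≥ 1, g (k + 1) = 1 - Real.exp (-(g k)))
    (p : ℕ → ℕ → ℝ)
    (h0 : ∀ j, p 0 j = if j = N then 1 else 0)
    (hstep : ∀ k j, p (k + 1) j =
      ∑ i ∈ Finset.range (n + 1),
        p k i * ((n.choose j : ℝ) * ((i : ℝ) / n) ^ j * (1 - (i : ℝ) / n) ^ (n - j))) :
    ∀ k : ℕ, 1 ≤ k → p k 0 ≤ Real.exp (-(n : ℝ) * p₀ * g k) := by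
  have hn0 : (0:ℝ) < n := by exact_mod_cast hn
  have hNn : N ≤ n := by
    have : (N:ℝ) ≤ n := by rw [hN]; nlinarith
    exact_mod_cast this
  have hx : ∀ i ∈ Finset.range (n+1), 0 ≤ (i:ℝ)/n ∧ (i:ℝ)/n ≤ 1 := by
    intro i hi
    constructor
    · positivity
    · rw [div_le_one hn0]
      exact_mod_cast Nat.lt_succ_iff.mp (Finset.mem_range.mp hi)
  -- nonnegativity of the transition terms
  have hterm : ∀ i ∈ Finset.range (n+1), ∀ j,
      (0:ℝ) ≤ (n.choose j : ℝ) * ((i:ℝ)/n)^j * (1 - (i:ℝ)/n)^(n-j) := by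
    intro i hi j
    obtain ⟨hx0, hx1⟩ := hx i hi
    have h1 : (0:ℝ) ≤ 1 - (i:ℝ)/n := by linarith
    positivity
  -- nonnegativity of p
  have hpnn : ∀ k j, 0 ≤ p k j := by
    intro k
    induction k with
    | zero => intro j; rw [h0]; positivity
    | succ k ih =>
      intro j
      rw [hstep]
      exact Finset.sum_nonneg fun i hi => mul_nonneg (ih i) (hterm i hi j)
  -- key pointwise bound
  have hkey : ∀ s : ℝ, 0 ≤ s → s ≤ 1 → ∀ i ∈ Finset.range (n+1),
      (1 - s * ((i:ℝ)/n))^n ≤ Real.exp (-s * i) := by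
    intro s hs0 hs1 i hi
    obtain ⟨hx0, hx1⟩ := hx i hi
    have hsx : s * ((i:ℝ)/n) ≤ 1 := by nlinarith
    have h1 : (0:ℝ) ≤ 1 - s * ((i:ℝ)/n) := by linarith
    have h2 : 1 - s * ((i:ℝ)/n) ≤ Real.exp (-(s * ((i:ℝ)/n))) := by
      have := Real.add_one_le_exp (-(s * ((i:ℝ)/n)))
      linarith
    calc (1 - s * ((i:ℝ)/n))^n ≤ (Real.exp (-(s * ((i:ℝ)/n))))^n :=
          pow_le_pow_left₀ h1 h2 n
      _ = Real.exp (-s * i) := by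
          rw [← Real.exp_nat_mul]
          congr 1
          field_simp
  set Q : ℕ → ℝ → ℝ := fun k t => ∑ j ∈ Finset.range (n+1), p k j * Real.exp (-t * j)
    with hQ
  -- one-step inequality
  have hB : ∀ k t, 0 ≤ t → Q (k+1) t ≤ Q k (1 - Real.exp (-t)) := by
    intro k t ht
    have het1 : Real.exp (-t) ≤ 1 := Real.exp_le_one_iff.mpr (by linarith)
    have het0 : 0 < Real.exp (-t) := Real.exp_pos _
    have calc1 : Q (k+1) t = ∑ i ∈ Finset.range (n+1), p k i *
        (((i:ℝ)/n) * Real.exp (-t) + (1 - (i:ℝ)/n))^n := by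
      rw [hQ]
      simp only
      calc (∑ j ∈ Finset.range (n+1), p (k+1) j * Real.exp (-t * j))
          = ∑ j ∈ Finset.range (n+1), ∑ i ∈ Finset.range (n+1),
              p k i * ((n.choose j : ℝ) * ((i:ℝ)/n)^j * (1 - (i:ℝ)/n)^(n-j)
                * Real.exp (-t * j)) := by
            refine Finset.sum_congr rfl fun j _ => ?_
            rw [hstep, Finset.sum_mul]
            exact Finset.sum_congr rfl fun i _ => by ring
        _ = ∑ i ∈ Finset.range (n+1), ∑ j ∈ Finset.range (n+1),
              p k i * ((n.choose j : ℝ) * ((i:ℝ)/n)^j * (1 - (i:ℝ)/n)^(n-j)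
                * Real.exp (-t * j)) := Finset.sum_comm
        _ = ∑ i ∈ Finset.range (n+1), p k i *
              (((i:ℝ)/n) * Real.exp (-t) + (1 - (i:ℝ)/n))^n := by
            refine Finset.sum_congr rfl fun i _ => ?_
            rw [← Finset.mul_sum]
            congr 1
            rw [add_pow]
            refine Finset.sum_congr rfl fun j _ => ?_
            rw [mul_pow]
            rw [show (-t : ℝ) * j = (j:ℕ) * (-t) by push_cast; ring,
              Real.exp_nat_mul]
            ring
    rw [calc1, hQ]
    simp only
    refine Finset.sum_le_sum fun i hi => ?_
    refine mul_le_mul_of_nonneg_left ?_ (hpnn k i)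
    have : ((i:ℝ)/n) * Real.exp (-t) + (1 - (i:ℝ)/n)
        = 1 - (1 - Real.exp (-t)) * ((i:ℝ)/n) := by ring
    rw [this]
    exact hkey (1 - Real.exp (-t)) (by linarith) (by linarith) i hi
  -- base step: p (j+1) 0 ≤ Q j 1
  have hC : ∀ j, p (j+1) 0 ≤ Q j 1 := by
    intro j
    rw [hstep, hQ]
    simp only
    refine Finset.sum_le_sum fun i hi => ?_
    refine mul_le_mul_of_nonneg_left ?_ (hpnn j i)
    simp only [Nat.choose_zero_right, pow_zero, Nat.sub_zero, Nat.cast_one, one_mul,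
      mul_one, CharP.cast_eq_zero]
    have := hkey 1 zero_le_one le_rfl i hi
    simpa using this
  -- g is nonnegative (for k ≥ 1)
  have hgnn : ∀ k, 1 ≤ k → 0 ≤ g k := by
    intro k hk
    induction k, hk using Nat.le_induction with
    | base => rw [hg1]; norm_num
    | succ k hk ih =>
      rw [hgrec k hk]
      have : Real.exp (-(g k)) ≤ 1 := Real.exp_le_one_iff.mpr (by linarith)
      linarith
  -- main induction
  have hmain : ∀ k, 1 ≤ k → ∀ j, p (j + k) 0 ≤ Q j (g k) := by
    intro k hk
    induction k, hk using Nat.le_induction with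
    | base => intro j; rw [hg1]; exact hC j
    | succ k hk ih =>
      intro j
      have h1 : j + (k + 1) = (j + 1) + k := by ring
      rw [h1]
      calc p ((j+1) + k) 0 ≤ Q (j+1) (g k) := ih (j+1)
        _ ≤ Q j (1 - Real.exp (-(g k))) := hB j (g k) (hgnn k hk)
        _ = Q j (g (k+1)) := by rw [hgrec k hk]
  -- evaluate Q 0
  have hQ0 : ∀ t, Q 0 t = Real.exp (-t * N) := by
    intro t
    rw [hQ]
    simp only
    rw [Finset.sum_eq_single N]
    · rw [h0]; simp
    · intro b _ hb; rw [h0]; simp [hb]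
    · intro h; exact absurd (Finset.mem_range.mpr (Nat.lt_succ_of_le hNn)) h
  intro k hk
  have := hmain k hk 0
  rw [zero_add, hQ0] at this
  calc p k 0 ≤ Real.exp (-(g k) * N) := this
    _ = Real.exp (-(n:ℝ) * p₀ * g k) := by rw [hN]; ring_nf
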